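/- arXiv:1903.09070 — 6 statements merged into one kernel-verified Lean document; each statement's English description precedes it below -/
import Mathlib

section
/- Let φ(x) = 1 - x + Σ_{k=2}^∞ (-1)^k x^k / (q_2^{k-1} q_3^{k-2} ⋯ q_{k-1}² q_k), where q_2 ≥ 2 and the q_k are increasing in k (q_2 ≤ q_3 ≤ q_4 ≤ ...). Then φ(q_2) > 0. -/
open Filter Finset

/-- `phiDenom q k = q_2^{k-1} q_3^{k-2} ⋯ q_{k-1}² q_k = ∏_{j=2}^{k} q_j^{k+1-j}`
(equal to `1` for `k = 0, 1`), the denominator of the `k`-th Taylor coefficient of `φ`. -/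
def phiDenom (q : ℕ → ℝ) (k : ℕ) : ℝ := ∏ j ∈ Finset.Icc 2 k, q j ^ (k + 1 - j)

lemma aux_qmono (q : ℕ → ℝ) (hmono : ∀ n : ℕ, 2 ≤ n → q n ≤ q (n + 1)) :
    ∀ n, 2 ≤ n → q 2 ≤ q n := by
  intro n hn
  induction n with
  | zero => omega
  | succ m ih =>
    rcases Nat.lt_or_ge m 2 with h | h
    · interval_cases m
      · omega
      · exact le_refl _
    · exact (ih h).trans (hmono m h)

lemma aux_pos (q : ℕ → ℝ) (hq : ∀ n, 2 ≤ n → 0 < q n) (k : ℕ) : 0 < phiDenom q k :=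
  Finset.prod_pos fun j hj => pow_pos (hq j (Finset.mem_Icc.1 hj).1) _

lemma aux_ratio (q : ℕ → ℝ) (k : ℕ) (hk : 1 ≤ k) :
    phiDenom q (k+1) = phiDenom q k * ∏ j ∈ Finset.Icc 2 (k+1), q j := by
  unfold phiDenom
  have h1 : ∀ j ∈ Finset.Icc 2 (k+1), q j ^ (k+1+1-j) = q j ^ (k+1-j) * q j := by
    intro j hj
    obtain ⟨h2, h3⟩ := Finset.mem_Icc.1 hj
    have : k+1+1-j = (k+1-j)+1 := by omega
    rw [this, pow_succ]
  rw [Finset.prod_congr rfl h1, Finset.prod_mul_distrib]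
  congr 1
  rw [Finset.prod_Icc_succ_top (by omega : 2 ≤ k+1)]
  simp

lemma aux_prod_big (q : ℕ → ℝ) (hq : ∀ n, 2 ≤ n → 0 < q n) (hq2 : 2 ≤ q 2)
    (hmono : ∀ n : ℕ, 2 ≤ n → q n ≤ q (n + 1)) (k : ℕ) (hk : 2 ≤ k) :
    q 2 < ∏ j ∈ Finset.Icc 2 (k+1), q j := by
  have hlow := aux_qmono q hmono
  rw [Finset.Icc_eq_cons_Ioc (by omega : 2 ≤ k+1), Finset.prod_cons]
  have h2 : (2:ℝ) ≤ ∏ j ∈ Finset.Ioc 2 (k+1), q j := by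
    calc (2:ℝ) = 2 ^ 1 := by norm_num
    _ ≤ 2 ^ (Finset.Ioc 2 (k+1)).card := by
        apply pow_le_pow_right₀ (by norm_num)
        rw [Nat.card_Ioc]; omega
    _ = ∏ _j ∈ Finset.Ioc 2 (k+1), (2:ℝ) := by rw [Finset.prod_const]
    _ ≤ ∏ j ∈ Finset.Ioc 2 (k+1), q j := by
        apply Finset.prod_le_prod (fun _ _ => by norm_num)
        intro j hj
        exact hq2.trans (hlow j (by exact (Finset.mem_Ioc.1 hj).1.le.trans' (by omega)))
  nlinarith [hq 2 le_rfl]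

lemma aux_A_dec (q : ℕ → ℝ) (hq : ∀ n, 2 ≤ n → 0 < q n) (hq2 : 2 ≤ q 2)
    (hmono : ∀ n : ℕ, 2 ≤ n → q n ≤ q (n + 1)) (k : ℕ) (hk : 2 ≤ k) :
    (q 2) ^ (k+1) / phiDenom q (k+1) < (q 2) ^ k / phiDenom q k := by
  have hq2pos : (0:ℝ) < q 2 := hq 2 le_rfl
  have hR := aux_prod_big q hq hq2 hmono k hk
  have hRpos : (0:ℝ) < ∏ j ∈ Finset.Icc 2 (k+1), q j :=
    Finset.prod_pos fun j hj => hq j (Finset.mem_Icc.1 hj).1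
  have hDk := aux_pos q hq k
  rw [aux_ratio q k (by omega), div_lt_div_iff₀ (mul_pos hDk hRpos) hDk, pow_succ]
  have h1 : (0:ℝ) < q 2 ^ k := pow_pos hq2pos k
  nlinarith [mul_pos (mul_pos h1 hDk) (sub_pos.2 hR)]

/-- for `φ(x) = 1 - x + ∑_{k≥2} (-1)ᵏ xᵏ / (q₂^{k-1}⋯q_k)` with `q₂ ≥ 2`
and `q_k` increasing, `φ(q₂) > 0`. -/
theorem statement9 (q : ℕ → ℝ) (hq : ∀ n, 2 ≤ n → 0 < q n) (hq2 : 2 ≤ q 2)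
    (hmono : ∀ n : ℕ, 2 ≤ n → q n ≤ q (n + 1))
    (hent : ∀ x : ℝ, Summable fun k : ℕ => (-1 : ℝ) ^ k * x ^ k / phiDenom q k) :
    0 < ∑' k : ℕ, (-1 : ℝ) ^ k * (q 2) ^ k / phiDenom q k := by
  have hq2pos : (0:ℝ) < q 2 := hq 2 le_rfl
  have hDpos := aux_pos q hq
  set t : ℕ → ℝ := fun k : ℕ => (-1 : ℝ) ^ k * (q 2) ^ k / phiDenom q k with ht
  -- summability
  have hs : Summable t := hent (q 2)
  have hf : Summable (fun i => t (i + 4)) := (summable_nat_add_iff 4).2 hs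
  have he : Summable (fun m => t (2 * m + 4)) := by
    have := hf.comp_injective
      (fun a b h => by dsimp at h; omega : Function.Injective (fun m : ℕ => 2 * m))
    simpa [Function.comp_def] using this
  have ho : Summable (fun m => t (2 * m + 1 + 4)) := by
    have := hf.comp_injective
      (fun a b h => by dsimp at h; omega : Function.Injective (fun m : ℕ => 2 * m + 1))
    simpa [Function.comp_def] using this
  -- split
  have hsplit : ∑' k, t k = (∑ i ∈ Finset.range 4, t i) + ∑' i, t (i + 4) :=
    (Summable.sum_add_tsum_nat_add' hf).symm
  -- head
  have hD0 : phiDenom q 0 = 1 := by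
    unfold phiDenom; rw [Finset.Icc_eq_empty (by omega)]; simp
  have hD1 : phiDenom q 1 = 1 := by
    unfold phiDenom; rw [Finset.Icc_eq_empty (by omega)]; simp
  have hD2 : phiDenom q 2 = q 2 := by simp [phiDenom]
  have hD3 : phiDenom q 3 = q 2 ^ 2 * q 3 := by
    unfold phiDenom
    rw [show (3:ℕ) = 2 + 1 from rfl, Finset.prod_Icc_succ_top (by omega : 2 ≤ 2+1)]
    norm_num [Finset.Icc_self]
  have hq3pos : (0:ℝ) < q 3 := hq 3 (by omega)
  have hq23 : q 2 ≤ q 3 := hmono 2 le_rfl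
  have hhead : 0 ≤ ∑ i ∈ Finset.range 4, t i := by
    simp only [Finset.sum_range_succ, Finset.sum_range_zero, ht, hD0, hD1, hD2, hD3]
    have e2 : q 2 ^ 2 / q 2 = q 2 := by field_simp
    have e3 : q 2 ^ 3 / (q 2 ^ 2 * q 3) = q 2 / q 3 := by field_simp
    have h23 : q 2 / q 3 ≤ 1 := (div_le_one hq3pos).2 hq23
    norm_num
    rw [neg_div, e3]
    linarith
  -- tail
  have hpair : ∀ m : ℕ, 0 < t (2*m+4) + t (2*m+1+4) := by
    intro m
    have he' : (-1:ℝ) ^ (2*m+4) = 1 := Even.neg_one_pow ⟨m+2, by ring⟩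
    have ho' : (-1:ℝ) ^ (2*m+1+4) = -1 := Odd.neg_one_pow ⟨m+2, by ring⟩
    have key := aux_A_dec q hq hq2 hmono (2*m+4) (by omega)
    simp only [ht, he', ho']
    rw [show 2*m+1+4 = 2*m+4+1 from by omega]
    have h1 : (-1:ℝ) * q 2 ^ (2*m+4+1) / phiDenom q (2*m+4+1)
        = -(q 2 ^ (2*m+4+1) / phiDenom q (2*m+4+1)) := by ring
    rw [one_mul, h1]
    linarith
  have htail : 0 < ∑' i, t (i + 4) := by
    have key : ∑' i, t (i + 4) = (∑' m, t (2*m+4)) + ∑' m, t (2*m+1+4) :=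
      (tsum_even_add_odd (f := fun i => t (i + 4)) he ho).symm
    have key2 : ∑' m, (t (2*m+4) + t (2*m+1+4))
        = (∑' m, t (2*m+4)) + ∑' m, t (2*m+1+4) := Summable.tsum_add he ho
    rw [key, ← key2]
    exact Summable.tsum_pos (he.add ho) (fun m => (hpair m).le) 0 (hpair 0)
  rw [show (∑' k : ℕ, (-1 : ℝ) ^ k * (q 2) ^ k / phiDenom q k) = ∑' k, t k from rfl, hsplit]
  linarith
end

section
/- Let P(z) = 1 - z + z²/a - z³/(a² b) + z⁴/(a³ b² c) be a polynomial with real parameters satisfying 3 ≤ a < 4 and a ≤ b ≤ c. Then min_{0 ≤ θ ≤ 2π} |P(a e^{iθ})| ≥ a/(b² c). -/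
private theorem key10 (a u e x : ℝ) (ha : 3 ≤ a) (ha4 : a ≤ 4) (hu0 : 0 < u) (hu1 : u ≤ 1)
    (he0 : 0 ≤ e) (he : 9*e ≤ u^3) (hx : -1 ≤ x) (hx1 : x ≤ 1) :
    0 ≤ 1+2*e-16*e*x^2+16*e*x^4+6*u*x-8*u*x^3-2*e*u*x+u^2-2*a-2*a*x+4*a*x^2
      -2*a*e+6*a*e*x+4*a*e*x^2-8*a*e*x^3-2*a*u-2*a*u*x+4*a*u*x^2+2*a^2-2*a^2*x := by
  have hu3 : u^3 ≤ u := by nlinarith [sq_nonneg u, sq_nonneg (1-u), mul_nonneg hu0.le hu0.le]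
  have he9 : 9*e ≤ 1 := by nlinarith
  have hs : 0 ≤ 1 - u := by linarith
  have hy : 0 ≤ 1 - x := by linarith
  have hd : 0 ≤ a - 3 := by linarith
  have h1 : 0 ≤ (1-u)^2 := sq_nonneg _
  have h2 : 0 ≤ e*(1-u)*x^2 := by positivity
  have h3 : 0 ≤ e*(1-x)^2*(16*x^2+3*x+1) := by
    nlinarith [mul_nonneg he0 (sq_nonneg ((1-x)*(8*x+3/4))), mul_nonneg he0 (sq_nonneg (1-x))]
  have h4 : 0 ≤ e*(1-u) := mul_nonneg he0 hs
  have h5 : 0 ≤ 2*(a-3)^2*(1-x) := by positivity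
  have h6 : 0 ≤ 6*(1-u)*(a-3)*(1-x) := by positivity
  have h7 : 0 ≤ 10*e*(a-3)*(1-x) := by positivity
  have h8 : 0 ≤ 8*e*(a-3)*(1-x)^3 := by positivity
  have h9 : 0 ≤ (1-u)*(1-x)^2*(24-4*a-e) := by
    apply mul_nonneg (by positivity); linarith
  have h10 : 0 ≤ (a-3)*(1-x)^2*(8-20*e) := by
    apply mul_nonneg (by positivity); linarith
  have h11 : 0 ≤ (1-x)^3*(8*u-5*e) := by
    apply mul_nonneg (by positivity); nlinarith
  linarith [h1,h2,h3,h4,h5,h6,h7,h8,h9,h10,h11]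

/-- Lemma 3: for `P(z) = 1 - z + z²/a - z³/(a²b) + z⁴/(a³b²c)` with
`3 ≤ a < 4` and `a ≤ b ≤ c`, one has `min_{0≤θ≤2π} |P(a e^{iθ})| ≥ a/(b²c)`. -/
theorem statement10 (a b c : ℝ) (ha3 : 3 ≤ a) (ha4 : a < 4) (hab : a ≤ b) (hbc : b ≤ c)
    (P : ℂ → ℂ)
    (hP : ∀ z : ℂ, P z = 1 - z + z ^ 2 / (a : ℂ) - z ^ 3 / ((a : ℂ) ^ 2 * (b : ℂ))
      + z ^ 4 / ((a : ℂ) ^ 3 * (b : ℂ) ^ 2 * (c : ℂ))) :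
    ∀ θ ∈ Set.Icc (0 : ℝ) (2 * Real.pi),
      a / (b ^ 2 * c) ≤ ‖P ((a : ℂ) * Complex.exp (θ * Complex.I))‖ := by
  intro θ _
  have ha0 : (0:ℝ) < a := by linarith
  have hb0 : (0:ℝ) < b := lt_of_lt_of_le ha0 hab
  have hc0 : (0:ℝ) < c := lt_of_lt_of_le hb0 hbc
  have haC : (a:ℂ) ≠ 0 := by exact_mod_cast ha0.ne'
  have hbC : (b:ℂ) ≠ 0 := by exact_mod_cast hb0.ne'
  have hcC : (c:ℂ) ≠ 0 := by exact_mod_cast hc0.ne'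
  obtain ⟨u, hu⟩ : ∃ u : ℝ, u = a/b := ⟨_, rfl⟩
  obtain ⟨e, he⟩ : ∃ e : ℝ, e = a/(b^2*c) := ⟨_, rfl⟩
  obtain ⟨x, hxdef⟩ : ∃ x : ℝ, x = Real.cos θ := ⟨_, rfl⟩
  obtain ⟨S, hSdef⟩ : ∃ S : ℝ, S = Real.sin θ := ⟨_, rfl⟩
  have hS : S^2 = 1 - x^2 := by
    have := Real.sin_sq_add_cos_sq θ
    rw [hxdef, hSdef]; linarith
  obtain ⟨w, hwdef⟩ : ∃ w : ℂ, w = (x:ℂ) + (S:ℂ)*Complex.I := ⟨_, rfl⟩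
  have hw : Complex.exp (θ*Complex.I) = w := by
    rw [Complex.exp_mul_I, hwdef, hxdef, hSdef]
    simp [Complex.ofReal_cos, Complex.ofReal_sin]
  obtain ⟨z, hzdef⟩ : ∃ z : ℂ, z = P ((a:ℂ)*Complex.exp (θ*Complex.I)) := ⟨_, rfl⟩
  have hz : z = 1 - (a:ℂ)*w + (a:ℂ)*w^2 - ((u:ℝ):ℂ)*w^3 + ((e:ℝ):ℂ)*w^4 := by
    rw [hzdef, hP, hw]
    have h2 : ((a:ℂ)*w)^2/(a:ℂ) = (a:ℂ)*w^2 := by field_simp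
    have h3 : ((a:ℂ)*w)^3/((a:ℂ)^2*(b:ℂ)) = ((u:ℝ):ℂ)*w^3 := by
      rw [hu]; push_cast; field_simp
    have h4 : ((a:ℂ)*w)^4/((a:ℂ)^3*(b:ℂ)^2*(c:ℂ)) = ((e:ℝ):ℂ)*w^4 := by
      rw [he]; push_cast; field_simp
    rw [h2, h3, h4]
  have hw2 : w^2 = (((x^2 - S^2 : ℝ)):ℂ) + (((2*x*S : ℝ)):ℂ)*Complex.I := by
    rw [hwdef, pow_two]
    apply Complex.ext <;>
      simp only [Complex.mul_re, Complex.mul_im, Complex.add_re, Complex.add_im,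
        Complex.sub_re, Complex.sub_im, Complex.ofReal_re, Complex.ofReal_im,
        Complex.I_re, Complex.I_im] <;> ring
  have hw3 : w^3 = (((x^3 - 3*x*S^2 : ℝ)):ℂ) + (((3*x^2*S - S^3 : ℝ)):ℂ)*Complex.I := by
    rw [pow_succ, hw2, hwdef]
    apply Complex.ext <;>
      simp only [Complex.mul_re, Complex.mul_im, Complex.add_re, Complex.add_im,
        Complex.sub_re, Complex.sub_im, Complex.ofReal_re, Complex.ofReal_im,
        Complex.I_re, Complex.I_im] <;> ring
  have hw4 : w^4 = (((x^4 - 6*x^2*S^2 + S^4 : ℝ)):ℂ)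
      + (((4*x^3*S - 4*x*S^3 : ℝ)):ℂ)*Complex.I := by
    rw [pow_succ, hw3, hwdef]
    apply Complex.ext <;>
      simp only [Complex.mul_re, Complex.mul_im, Complex.add_re, Complex.add_im,
        Complex.sub_re, Complex.sub_im, Complex.ofReal_re, Complex.ofReal_im,
        Complex.I_re, Complex.I_im] <;> ring
  have hre : z.re = 1 - a*x + a*(2*x^2-1) - u*(4*x^3-3*x) + e*(8*x^4-8*x^2+1) := by
    rw [hz, hw2, hw3, hw4, hwdef]
    simp only [Complex.add_re, Complex.sub_re, Complex.mul_re, Complex.mul_im,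
      Complex.add_im, Complex.sub_im, Complex.one_re, Complex.one_im,
      Complex.ofReal_re, Complex.ofReal_im, Complex.I_re, Complex.I_im]
    linear_combination (-a + 3*u*x + e*(S^2+1-7*x^2)) * hS
  have him : z.im = S * (-a + 2*a*x - u*(4*x^2-1) + e*(8*x^3-4*x)) := by
    rw [hz, hw2, hw3, hw4, hwdef]
    simp only [Complex.add_re, Complex.sub_re, Complex.mul_re, Complex.mul_im,
      Complex.add_im, Complex.sub_im, Complex.one_re, Complex.one_im,
      Complex.ofReal_re, Complex.ofReal_im, Complex.I_re, Complex.I_im]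
    linear_combination (u*S - 4*e*x*S) * hS
  have hu0 : 0 < u := hu ▸ div_pos ha0 hb0
  have hu1 : u ≤ 1 := by rw [hu, div_le_one hb0]; exact hab
  have he0 : 0 ≤ e := by rw [he]; positivity
  have he9 : 9*e ≤ u^3 := by
    have f1 : 9*(a*b^2*b) ≤ 9*(a*b^2*c) := by
      nlinarith [mul_le_mul_of_nonneg_left hbc (by positivity : (0:ℝ) ≤ a*b^2)]
    have f2 : 9*(a*b^2*c) ≤ a^2*(a*b^2*c) := by
      nlinarith [mul_le_mul_of_nonneg_right (by nlinarith : (9:ℝ) ≤ a^2)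
        (by positivity : (0:ℝ) ≤ a*b^2*c)]
    rw [hu, he, div_pow]
    rw [show 9*(a/(b^2*c)) = (9*a)/(b^2*c) by ring]
    rw [div_le_div_iff₀ (by positivity) (by positivity)]
    nlinarith [f1, f2, mul_pos hb0 hc0]
  have hkey := key10 a u e x ha3 ha4.le hu0 hu1 he0 he9
    (hxdef ▸ Real.neg_one_le_cos θ) (hxdef ▸ Real.cos_le_one θ)
  have hid : (1 - a*x + a*(2*x^2-1) - u*(4*x^3-3*x) + e*(8*x^4-8*x^2+1))^2
      + (S * (-a + 2*a*x - u*(4*x^2-1) + e*(8*x^3-4*x)))^2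
      = (1+2*e-16*e*x^2+16*e*x^4+6*u*x-8*u*x^3-2*e*u*x+u^2-2*a-2*a*x+4*a*x^2
        -2*a*e+6*a*e*x+4*a*e*x^2-8*a*e*x^3-2*a*u-2*a*u*x+4*a*u*x^2+2*a^2-2*a^2*x) + e^2 := by
    linear_combination (-a + 2*a*x - u*(4*x^2-1) + e*(8*x^3-4*x))^2 * hS
  have hsq : e^2 ≤ Complex.normSq z := by
    rw [Complex.normSq_apply, hre, him]
    linarith [hkey, hid]
  have hfin : e ≤ ‖z‖ := by
    calc e = Real.sqrt (e^2) := (Real.sqrt_sq he0).symm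
      _ ≤ Real.sqrt (Complex.normSq z) := Real.sqrt_le_sqrt hsq
      _ = ‖z‖ := (Complex.norm_def z).symm
  rw [← he, ← hzdef] at *
  exact hfin
end

section
/- Let a, b, c be real numbers with 3 ≤ a < 4 and a ≤ b ≤ c. Then for every y ∈ [0, 2], y⁴ - (bc + a) y³ + (b²c + abc + a - 4) y² - (b²c + ab²c + abc + a/b - 3bc - 3a) y + (b²c/a + 2ab²c + ac - 2b²c - 2abc - 2a + 2) ≥ 0. -/
set_option maxHeartbeats 2000000 in
set_option maxRecDepth 8000 in
lemma statement11_aux (u v w s : ℝ) :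
    0 ≤ (3/2 : ℝ) * (v ^ 2 - s ^ 2) ^ 2 +
      ((87/2 : ℝ) * s ^ 4 +
      36 * s ^ 6 +
      9 * s ^ 8 +
      27 * w ^ 2 * s ^ 6 +
      6 * v ^ 2 +
      96 * v ^ 2 * s ^ 4 +
      66 * v ^ 2 * s ^ 6 +
      3 * v ^ 2 * s ^ 8 +
      27 * v ^ 2 * w ^ 2 * s ^ 4 +
      18 * v ^ 2 * w ^ 2 * s ^ 6 +
      (15/2 : ℝ) * v ^ 4 +
      81 * v ^ 4 * s ^ 4 +
      27 * v ^ 4 * s ^ 6 +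
      3 * v ^ 4 * w ^ 2 +
      18 * v ^ 4 * w ^ 2 * s ^ 4 +
      3 * v ^ 4 * w ^ 2 * s ^ 6 +
      6 * v ^ 6 +
      27 * v ^ 6 * s ^ 4 +
      3 * v ^ 6 * s ^ 6 +
      1 * v ^ 6 * w ^ 2 +
      3 * v ^ 6 * w ^ 2 * s ^ 4 +
      1 * v ^ 8 +
      3 * v ^ 8 * s ^ 4 +
      45 * u ^ 2 * s ^ 2 +
      147 * u ^ 2 * s ^ 4 +
      87 * u ^ 2 * s ^ 6 +
      6 * u ^ 2 * s ^ 8 +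
      54 * u ^ 2 * w ^ 2 * s ^ 4 +
      27 * u ^ 2 * w ^ 2 * s ^ 6 +
      2 * u ^ 2 * v ^ 2 +
      95 * u ^ 2 * v ^ 2 * s ^ 2 +
      260 * u ^ 2 * v ^ 2 * s ^ 4 +
      79 * u ^ 2 * v ^ 2 * s ^ 6 +
      1 * u ^ 2 * v ^ 2 * s ^ 8 +
      27 * u ^ 2 * v ^ 2 * w ^ 2 * s ^ 2 +
      63 * u ^ 2 * v ^ 2 * w ^ 2 * s ^ 4 +
      12 * u ^ 2 * v ^ 2 * w ^ 2 * s ^ 6 +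
      6 * u ^ 2 * v ^ 4 +
      81 * u ^ 2 * v ^ 4 * s ^ 2 +
      135 * u ^ 2 * v ^ 4 * s ^ 4 +
      18 * u ^ 2 * v ^ 4 * s ^ 6 +
      1 * u ^ 2 * v ^ 4 * w ^ 2 +
      18 * u ^ 2 * v ^ 4 * w ^ 2 * s ^ 2 +
      18 * u ^ 2 * v ^ 4 * w ^ 2 * s ^ 4 +
      1 * u ^ 2 * v ^ 4 * w ^ 2 * s ^ 6 +
      2 * u ^ 2 * v ^ 6 +
      27 * u ^ 2 * v ^ 6 * s ^ 2 +
      24 * u ^ 2 * v ^ 6 * s ^ 4 +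
      1 * u ^ 2 * v ^ 6 * s ^ 6 +
      3 * u ^ 2 * v ^ 6 * w ^ 2 * s ^ 2 +
      1 * u ^ 2 * v ^ 6 * w ^ 2 * s ^ 4 +
      3 * u ^ 2 * v ^ 8 * s ^ 2 +
      1 * u ^ 2 * v ^ 8 * s ^ 4 +
      111 * u ^ 4 * s ^ 2 +
      191 * u ^ 4 * s ^ 4 +
      55 * u ^ 4 * s ^ 6 +
      1 * u ^ 4 * s ^ 8 +
      27 * u ^ 4 * w ^ 2 * s ^ 2 +
      54 * u ^ 4 * w ^ 2 * s ^ 4 +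
      9 * u ^ 4 * w ^ 2 * s ^ 6 +
      194 * u ^ 4 * v ^ 2 * s ^ 2 +
      211 * u ^ 4 * v ^ 2 * s ^ 4 +
      28 * u ^ 4 * v ^ 2 * s ^ 6 +
      45 * u ^ 4 * v ^ 2 * w ^ 2 * s ^ 2 +
      33 * u ^ 4 * v ^ 2 * w ^ 2 * s ^ 4 +
      2 * u ^ 4 * v ^ 2 * w ^ 2 * s ^ 6 +
      1 * u ^ 4 * v ^ 4 +
      108 * u ^ 4 * v ^ 4 * s ^ 2 +
      63 * u ^ 4 * v ^ 4 * s ^ 4 +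
      3 * u ^ 4 * v ^ 4 * s ^ 6 +
      15 * u ^ 4 * v ^ 4 * w ^ 2 * s ^ 2 +
      4 * u ^ 4 * v ^ 4 * w ^ 2 * s ^ 4 +
      21 * u ^ 4 * v ^ 6 * s ^ 2 +
      5 * u ^ 4 * v ^ 6 * s ^ 4 +
      1 * u ^ 4 * v ^ 6 * w ^ 2 * s ^ 2 +
      1 * u ^ 4 * v ^ 8 * s ^ 2 +
      113 * u ^ 6 * s ^ 2 +
      103 * u ^ 6 * s ^ 4 +
      13 * u ^ 6 * s ^ 6 +
      27 * u ^ 6 * w ^ 2 * s ^ 2 +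
      18 * u ^ 6 * w ^ 2 * s ^ 4 +
      1 * u ^ 6 * w ^ 2 * s ^ 6 +
      135 * u ^ 6 * v ^ 2 * s ^ 2 +
      66 * u ^ 6 * v ^ 2 * s ^ 4 +
      3 * u ^ 6 * v ^ 2 * s ^ 6 +
      21 * u ^ 6 * v ^ 2 * w ^ 2 * s ^ 2 +
      5 * u ^ 6 * v ^ 2 * w ^ 2 * s ^ 4 +
      45 * u ^ 6 * v ^ 4 * s ^ 2 +
      9 * u ^ 6 * v ^ 4 * s ^ 4 +
      3 * u ^ 6 * v ^ 4 * w ^ 2 * s ^ 2 +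
      4 * u ^ 6 * v ^ 6 * s ^ 2 +
      54 * u ^ 8 * s ^ 2 +
      24 * u ^ 8 * s ^ 4 +
      1 * u ^ 8 * s ^ 6 +
      9 * u ^ 8 * w ^ 2 * s ^ 2 +
      2 * u ^ 8 * w ^ 2 * s ^ 4 +
      39 * u ^ 8 * v ^ 2 * s ^ 2 +
      7 * u ^ 8 * v ^ 2 * s ^ 4 +
      3 * u ^ 8 * v ^ 2 * w ^ 2 * s ^ 2 +
      6 * u ^ 8 * v ^ 4 * s ^ 2 +
      12 * u ^ 10 * s ^ 2 +
      2 * u ^ 10 * s ^ 4 +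
      1 * u ^ 10 * w ^ 2 * s ^ 2 +
      4 * u ^ 10 * v ^ 2 * s ^ 2 +
      1 * u ^ 12 * s ^ 2) := by
  positivity

/-- for `3 ≤ a < 4`, `a ≤ b ≤ c` and every `y ∈ [0, 2]`,
`y⁴ - (bc+a)y³ + (b²c+abc+a-4)y² - (b²c+ab²c+abc+a/b-3bc-3a)y
  + (b²c/a+2ab²c+ac-2b²c-2abc-2a+2) ≥ 0`. -/
theorem statement11 (a b c : ℝ) (ha3 : 3 ≤ a) (ha4 : a < 4) (hab : a ≤ b) (hbc : b ≤ c) :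
    ∀ y ∈ Set.Icc (0 : ℝ) 2,
      0 ≤ y ^ 4 - (b * c + a) * y ^ 3 + (b ^ 2 * c + a * b * c + a - 4) * y ^ 2
        - (b ^ 2 * c + a * b ^ 2 * c + a * b * c + a / b - 3 * b * c - 3 * a) * y
        + (b ^ 2 * c / a + 2 * a * b ^ 2 * c + a * c - 2 * b ^ 2 * c - 2 * a * b * c
            - 2 * a + 2) := by
  intro y hy
  obtain ⟨hy0, hy2⟩ := hy
  have ha0 : (0:ℝ) < a := by linarith
  have hb0 : (0:ℝ) < b := by linarith
  obtain ⟨u, hu⟩ : ∃ u : ℝ, a - 3 = u ^ 2 := ⟨Real.sqrt (a - 3), (Real.sq_sqrt (by linarith)).symm⟩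
  obtain ⟨v, hv⟩ : ∃ v : ℝ, b - a = v ^ 2 := ⟨Real.sqrt (b - a), (Real.sq_sqrt (by linarith)).symm⟩
  obtain ⟨w, hw⟩ : ∃ w : ℝ, c - b = w ^ 2 := ⟨Real.sqrt (c - b), (Real.sq_sqrt (by linarith)).symm⟩
  obtain ⟨s, hs⟩ : ∃ s : ℝ, 2 - y = s ^ 2 := ⟨Real.sqrt (2 - y), (Real.sq_sqrt (by linarith)).symm⟩
  have key : 0 ≤ a * b * (y ^ 4 - (b * c + a) * y ^ 3 + (b ^ 2 * c + a * b * c + a - 4) * y ^ 2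
        - (b ^ 2 * c + a * b ^ 2 * c + a * b * c + a / b - 3 * b * c - 3 * a) * y
        + (b ^ 2 * c / a + 2 * a * b ^ 2 * c + a * c - 2 * b ^ 2 * c - 2 * a * b * c
            - 2 * a + 2)) := by
    have ha' : a = u ^ 2 + 3 := by linarith
    have hb' : b = u ^ 2 + v ^ 2 + 3 := by linarith
    have hc' : c = u ^ 2 + v ^ 2 + w ^ 2 + 3 := by linarith
    have hy' : y = 2 - s ^ 2 := by linarith
    subst ha' hb' hc' hy'
    have h3 : (u ^ 2 + 3 : ℝ) ≠ 0 := by positivity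
    have h4 : (u ^ 2 + v ^ 2 + 3 : ℝ) ≠ 0 := by positivity
    convert statement11_aux u v w s using 1
    field_simp
    ring
  have hab : (0:ℝ) < a * b := mul_pos ha0 hb0
  nlinarith [key, hab]
end

section
/- Let (q_k)_{k≥2} be an increasing sequence of positive reals with q_2 ≥ 3 and lim_{n→∞} q_n = c < q_∞, and let R_5(z) := Σ_{k=5}^∞ (-1)^k z^k / (q_2^{k-1} q_3^{k-2} ⋯ q_{k-1}² q_k). Then max_{0 ≤ θ ≤ 2π} |R_5(q_2 e^{iθ})| ≤ q_2 / (q_3³ q_4³ - q_3²). -/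
open Filter Finset

/-- The Laguerre–Pólya class: `f(x) = c xⁿ e^{-αx²+βx} ∏ₖ (1 - x/xₖ) e^{x/xₖ}`,
with `α ≥ 0`, `xₖ ≠ 0`, `∑ xₖ⁻² < ∞`; the product is over an arbitrary
(possibly finite or empty) index set `I ⊆ ℕ`. -/
def LaguerrePolya (f : ℝ → ℝ) : Prop :=
  ∃ (c α β : ℝ) (n : ℕ) (I : Set ℕ) (x : ℕ → ℝ),
    0 ≤ α ∧ (∀ k ∈ I, x k ≠ 0) ∧
    Summable (fun k : I => ((x k)⁻¹) ^ 2) ∧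
    ∀ t : ℝ, f t = c * t ^ n * Real.exp (-α * t ^ 2 + β * t) *
      ∏' k : I, ((1 - t / x (k : ℕ)) * Real.exp (t / x (k : ℕ)))

/-- `q_∞ := inf {a² : a > 1, g_a ∈ L-P}` where `g_a(x) = ∑ⱼ xʲ a^{-j²}`
is the partial theta function. -/
noncomputable def qInfty : ℝ :=
  sInf {s : ℝ | ∃ a : ℝ, 1 < a ∧ s = a ^ 2 ∧
    LaguerrePolya (fun x => ∑' j : ℕ, x ^ j / a ^ (j ^ 2))}

theorem phiDenom_succ_aux (q : ℕ → ℝ) (n : ℕ) (hn : 1 ≤ n) :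
    phiDenom q (n+1) = phiDenom q n * ∏ j ∈ Finset.Icc 2 (n+1), q j := by
  unfold phiDenom
  rw [Finset.prod_Icc_succ_top (by omega : 2 ≤ n+1),
      Finset.prod_Icc_succ_top (by omega : 2 ≤ n+1),
      show n + 1 + 1 - (n+1) = 1 by omega, pow_one, ← mul_assoc]
  congr 1
  rw [← Finset.prod_mul_distrib]
  apply Finset.prod_congr rfl
  intro j hj
  rw [Finset.mem_Icc] at hj
  rw [show n + 1 + 1 - j = (n + 1 - j) + 1 by omega, pow_succ]

/-- Lemma 4: for an increasing sequence of positive reals `(q_k)_{k≥2}`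
with `q₂ ≥ 3` and `qₙ → c < q_∞`, the tail `R₅(z) = ∑_{k≥5} (-1)ᵏ zᵏ/(q₂^{k-1}⋯q_k)`
satisfies `max_{0≤θ≤2π} |R₅(q₂ e^{iθ})| ≤ q₂/(q₃³q₄³ - q₃²)`. -/
theorem statement12 (q : ℕ → ℝ) (hq : ∀ n, 2 ≤ n → 0 < q n) (hq2 : 3 ≤ q 2)
    (hmono : ∀ n : ℕ, 2 ≤ n → q n ≤ q (n + 1)) (c : ℝ)
    (hlim : Tendsto q atTop (nhds c)) (hc : c < qInfty) :
    ∀ θ ∈ Set.Icc (0 : ℝ) (2 * Real.pi),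
      ‖(∑' k : ℕ, (-1 : ℂ) ^ (k + 5) *
          ((q 2 : ℂ) * Complex.exp (θ * Complex.I)) ^ (k + 5) / (phiDenom q (k + 5) : ℂ))‖
        ≤ q 2 / (q 3 ^ 3 * q 4 ^ 3 - q 3 ^ 2) := by
  intro θ hθ
  -- basic positivity and monotonicity facts
  have hmono' : ∀ i j : ℕ, 2 ≤ i → i ≤ j → q i ≤ q j := by
    intro i j h2i hij
    induction j with
    | zero => omega
    | succ m ih =>
      rcases Nat.lt_or_ge i (m+1) with h | h
      · exact le_trans (ih (by omega)) (hmono m (by omega))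
      · have : i = m + 1 := by omega
        rw [this]
  have h2 : 0 < q 2 := hq 2 le_rfl
  have h3 : 3 ≤ q 3 := le_trans hq2 (hmono' 2 3 le_rfl (by norm_num))
  have h4 : 3 ≤ q 4 := le_trans h3 (hmono' 3 4 (by norm_num) (by norm_num))
  have h3p : (0:ℝ) < q 3 := by linarith
  have h4p : (0:ℝ) < q 4 := by linarith
  have hDpos : ∀ n, 0 < phiDenom q n := by
    intro n
    apply Finset.prod_pos
    intro j hj
    rw [Finset.mem_Icc] at hj
    exact pow_pos (hq j hj.1) _
  have hD5 : phiDenom q 5 = q 2^4 * q 3^3 * q 4^2 * q 5 := by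
    show ∏ j ∈ Finset.Icc 2 5, q j ^ (5 + 1 - j) = _
    rw [show Finset.Icc 2 5 = {2,3,4,5} from rfl]
    simp [Finset.prod_insert, Finset.mem_insert]
    ring
  -- key lower bound on the denominators
  have key : ∀ m : ℕ, q 2^4 * q 3^3 * q 4^3 * (q 2 * q 3 * q 4^3)^m ≤ phiDenom q (m+5) := by
    intro m
    induction m with
    | zero =>
      rw [pow_zero, mul_one, hD5]
      have h45 : q 4 ≤ q 5 := hmono' 4 5 (by norm_num) (by norm_num)
      nlinarith [pow_pos h2 4, pow_pos h3p 3, pow_pos h4p 2,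
        mul_pos (mul_pos (pow_pos h2 4) (pow_pos h3p 3)) (pow_pos h4p 2)]
    | succ m ih =>
      have hrec := phiDenom_succ_aux q (m+5) (by omega)
      rw [show m + 1 + 5 = (m+5)+1 by ring, hrec]
      have hprod : q 2 * q 3 * q 4^3 ≤ ∏ j ∈ Finset.Icc 2 (m+5+1), q j := by
        have hsub : Finset.Icc 2 6 ⊆ Finset.Icc 2 (m+5+1) :=
          Finset.Icc_subset_Icc le_rfl (by omega)
        have h6 : ∏ j ∈ Finset.Icc 2 6, q j = q 2 * q 3 * q 4 * q 5 * q 6 := by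
          rw [show Finset.Icc 2 6 = {2,3,4,5,6} from rfl]
          simp [Finset.prod_insert, Finset.mem_insert]
          ring
        have hone : (1:ℝ) ≤ ∏ j ∈ Finset.Icc 2 (m+5+1) \ Finset.Icc 2 6, q j := by
          have := Finset.prod_le_prod (s := Finset.Icc 2 (m+5+1) \ Finset.Icc 2 6)
            (f := fun _ => (1:ℝ)) (g := q) (fun i _ => zero_le_one)
            (fun i hi => by
              rw [Finset.mem_sdiff, Finset.mem_Icc] at hi
              have := hmono' 2 i le_rfl hi.1.1
              show (1:ℝ) ≤ q i
              linarith)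
          simpa using this
        have hsplit : ∏ j ∈ Finset.Icc 2 (m+5+1), q j
            = (∏ j ∈ Finset.Icc 2 (m+5+1) \ Finset.Icc 2 6, q j) * ∏ j ∈ Finset.Icc 2 6, q j :=
          (Finset.prod_sdiff hsub).symm
        have h45 : q 4 ≤ q 5 := hmono' 4 5 (by norm_num) (by norm_num)
        have h46 : q 4 ≤ q 6 := hmono' 4 6 (by norm_num) (by norm_num)
        have hh : q 4 * q 4 ≤ q 5 * q 6 := mul_le_mul h45 h46 h4p.le (le_trans h4p.le h45)
        have hstep : q 2 * q 3 * q 4^3 ≤ ∏ j ∈ Finset.Icc 2 6, q j := by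
          rw [h6]
          calc q 2 * q 3 * q 4^3 = (q 2 * q 3 * q 4) * (q 4 * q 4) := by ring
            _ ≤ (q 2 * q 3 * q 4) * (q 5 * q 6) :=
                mul_le_mul_of_nonneg_left hh (by positivity)
            _ = q 2 * q 3 * q 4 * q 5 * q 6 := by ring
        have h6pos : (0:ℝ) < ∏ j ∈ Finset.Icc 2 6, q j := by
          rw [h6]
          have h5p : (0:ℝ) < q 5 := lt_of_lt_of_le h4p h45
          have h6p : (0:ℝ) < q 6 := lt_of_lt_of_le h4p h46
          positivity
        calc q 2 * q 3 * q 4^3 ≤ ∏ j ∈ Finset.Icc 2 6, q j := hstep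
          _ ≤ (∏ j ∈ Finset.Icc 2 (m+5+1) \ Finset.Icc 2 6, q j) * ∏ j ∈ Finset.Icc 2 6, q j :=
              le_mul_of_one_le_left h6pos.le hone
          _ = _ := hsplit.symm
      calc q 2^4 * q 3^3 * q 4^3 * (q 2 * q 3 * q 4^3)^(m+1)
          = (q 2^4 * q 3^3 * q 4^3 * (q 2 * q 3 * q 4^3)^m) * (q 2 * q 3 * q 4^3) := by ring
        _ ≤ phiDenom q (m+5) * ∏ j ∈ Finset.Icc 2 (m+5+1), q j :=
            mul_le_mul ih hprod (by positivity) (hDpos _).le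
  -- the terms of the series and their norms
  set f : ℕ → ℂ := fun k => (-1:ℂ)^(k+5) *
      ((q 2:ℂ) * Complex.exp (θ*Complex.I))^(k+5) / (phiDenom q (k+5):ℂ) with hfdef
  have hnorm : ∀ k, ‖f k‖ = q 2^(k+5) / phiDenom q (k+5) := by
    intro k
    rw [hfdef]
    simp only []
    rw [norm_div, norm_mul, norm_pow, norm_pow, norm_mul]
    simp [Complex.norm_exp, abs_of_pos h2, abs_of_pos (hDpos (k+5))]
  have hd3 : (3:ℝ)^3 ≤ q 4^3 := pow_le_pow_left₀ (by norm_num) h4 3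
  have hr0 : (0:ℝ) ≤ ((q 3 * q 4^3)⁻¹) := by positivity
  have hr1 : ((q 3 * q 4^3)⁻¹) < 1 := by
    rw [inv_lt_one_iff₀]
    right; nlinarith
  have hbound : ∀ k, ‖f k‖ ≤ q 2 / (q 3^3 * q 4^3) * ((q 3 * q 4^3)⁻¹)^k := by
    intro k
    rw [hnorm k]
    have heq : q 2^(k+5) / (q 2^4 * q 3^3 * q 4^3 * (q 2 * q 3 * q 4^3)^k)
        = q 2 / (q 3^3 * q 4^3) * ((q 3 * q 4^3)⁻¹)^k := by
      rw [mul_pow, mul_pow, inv_pow]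
      field_simp
      ring
    rw [← heq]
    exact div_le_div_of_nonneg_left (by positivity) (by positivity) (key k)
  have hsumg : Summable (fun k : ℕ => q 2 / (q 3^3 * q 4^3) * ((q 3 * q 4^3)⁻¹)^k) :=
    (summable_geometric_of_lt_one hr0 hr1).mul_left _
  have hsumnorm : Summable (fun k => ‖f k‖) :=
    Summable.of_nonneg_of_le (fun k => norm_nonneg _) hbound hsumg
  have hfinal : q 2 / (q 3^3 * q 4^3) * (1 - (q 3 * q 4^3)⁻¹)⁻¹
      = q 2 / (q 3^3 * q 4^3 - q 3^2) := by
    have h1 : (1:ℝ) < q 3 * q 4^3 := by nlinarith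
    have h1p : (0:ℝ) < q 3 * q 4^3 := by linarith
    have h2' : (0:ℝ) < q 3^3 * q 4^3 - q 3^2 := by
      have e : q 3^3 * q 4^3 - q 3^2 = q 3^2 * (q 3 * q 4^3 - 1) := by ring
      rw [e]; exact mul_pos (pow_pos h3p 2) (by linarith)
    rw [show (1 - (q 3 * q 4^3)⁻¹) = (q 3 * q 4^3 - 1)/(q 3 * q 4^3) by field_simp, inv_div,
      div_mul_div_comm,
      div_eq_div_iff (ne_of_gt (mul_pos (show (0:ℝ) < q 3^3 * q 4^3 by positivity)
        (by linarith : (0:ℝ) < q 3 * q 4^3 - 1))) (ne_of_gt h2')]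
    ring
  calc ‖∑' k : ℕ, f k‖ ≤ ∑' k : ℕ, ‖f k‖ := by
        simpa using norm_tsum_le_tsum_norm (f := f)
          (by simpa using hsumnorm)
    _ ≤ ∑' k : ℕ, q 2 / (q 3^3 * q 4^3) * ((q 3 * q 4^3)⁻¹)^k :=
        Summable.tsum_le_tsum hbound hsumnorm hsumg
    _ = q 2 / (q 3^3 * q 4^3) * (1 - (q 3 * q 4^3)⁻¹)⁻¹ := by
        rw [tsum_mul_left, tsum_geometric_of_lt_one hr0 hr1]
    _ = q 2 / (q 3^3 * q 4^3 - q 3^2) := hfinal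
end

section
/- Let S_4(z) = 1 - z + z²/q_2 - z³/(q_2² q_3) + z⁴/(q_2³ q_3² q_4) be a polynomial with q_2, q_3, q_4 > 0 and q_2 ≥ 3. Then S_4 has at least one (complex) root in the closed disk {z : |z| ≤ q_2}. -/
open Polynomial

/-- If all complex roots of `w^4 - w^3 + a w^2 - e3 w + e4` have `|w| < a`, then the
value at `a` is positive (otherwise there would be a real root `≥ a`). -/
lemma statement13_aux_pos (a e3 e4 : ℝ) (ha0 : 0 < a) (he3 : 0 < e3) (he4 : 0 < e4)
    (hroots : ∀ w : ℂ, w ^ 4 - w ^ 3 + (a : ℂ) * w ^ 2 - (e3 : ℂ) * w + (e4 : ℂ) = 0 →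
      ‖w‖ < a) :
    0 < a ^ 4 - e3 * a + e4 := by
  by_contra hle
  push_neg at hle
  set f : ℝ → ℝ := fun t => t ^ 4 - t ^ 3 + a * t ^ 2 - e3 * t + e4 with hf
  have hfa : f a ≤ 0 := by
    show a ^ 4 - a ^ 3 + a * a ^ 2 - e3 * a + e4 ≤ 0
    nlinarith [hle]
  set M : ℝ := 1 + a + e3 + e4 with hMdef
  have haM : a ≤ M := by rw [hMdef]; linarith
  have hM1 : 1 ≤ M := by rw [hMdef]; linarith
  have hfM : 0 ≤ f M := by
    show 0 ≤ M ^ 4 - M ^ 3 + a * M ^ 2 - e3 * M + e4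
    have hM0 : 0 ≤ M := by linarith
    have hMe3 : e3 ≤ M - 1 := by rw [hMdef]; linarith
    have hM2 : 1 ≤ M ^ 2 := by nlinarith
    have hh1 : e3 ≤ M ^ 2 * (M - 1) := by nlinarith
    have hh2 : 0 ≤ M * (M ^ 2 * (M - 1) - e3) := mul_nonneg hM0 (by linarith)
    have hh3 : 0 ≤ a * M ^ 2 := by positivity
    nlinarith [hh2, hh3]
  have hc : ContinuousOn f (Set.Icc a M) := by
    apply Continuous.continuousOn
    rw [hf]
    fun_prop
  obtain ⟨t, htmem, hft⟩ := intermediate_value_Icc haM hc ⟨hfa, hfM⟩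
  have htc : (t : ℂ) ^ 4 - (t : ℂ) ^ 3 + (a : ℂ) * (t : ℂ) ^ 2 - (e3 : ℂ) * (t : ℂ)
      + (e4 : ℂ) = 0 := by
    have h0 : ((t ^ 4 - t ^ 3 + a * t ^ 2 - e3 * t + e4 : ℝ) : ℂ) = 0 := by
      rw [show t ^ 4 - t ^ 3 + a * t ^ 2 - e3 * t + e4 = f t from rfl, hft]
      norm_num
    push_cast at h0
    linear_combination h0
  have habst : ‖(t : ℂ)‖ < a := hroots _ htc
  rw [Complex.norm_real, Real.norm_eq_abs] at habst
  have h5 : a ≤ t := htmem.1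
  have h6 : t ≤ |t| := le_abs_self t
  linarith

/-- Core argument: the quartic `w^4 - w^3 + a w^2 - e3 w + e4` with `0 < a ≤ 1/3`,
`e3, e4 > 0` cannot have all four roots strictly inside `|w| < a`. -/
lemma statement13_core (a e3 e4 : ℝ) (ha0 : 0 < a) (ha3 : a ≤ 1 / 3)
    (he3 : 0 < e3) (he4 : 0 < e4)
    (hroots : ∀ w : ℂ, w ^ 4 - w ^ 3 + (a : ℂ) * w ^ 2 - (e3 : ℂ) * w + (e4 : ℂ) = 0 →
      ‖w‖ < a) :
    False := by
  set p : ℂ[X] := X ^ 4 - X ^ 3 + C ((a : ℂ)) * X ^ 2 - C ((e3 : ℂ)) * X + C ((e4 : ℂ))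
    with hpdef
  have hmonic : p.Monic := by rw [hpdef]; monicity!
  have hdeg : p.natDegree = 4 := by rw [hpdef]; compute_degree!
  have hsplit : p.Splits := IsAlgClosed.splits p
  have hcard : p.roots.card = 4 := by rw [splits_iff_card_roots.mp hsplit, hdeg]
  have hfact : p = (p.roots.map fun s => X - C s).prod :=
    hsplit.eq_prod_roots_of_monic hmonic
  have hl : p.roots.toList.length = 4 := by rw [Multiset.length_toList, hcard]
  obtain ⟨s1, s2, s3, s4, hL⟩ : ∃ s1 s2 s3 s4 : ℂ, p.roots.toList = [s1, s2, s3, s4] := by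
    rcases hList : p.roots.toList with _ | ⟨t1, _ | ⟨t2, _ | ⟨t3, _ | ⟨t4, _ | ⟨t5, r⟩⟩⟩⟩⟩ <;>
        rw [hList] at hl <;> simp only [List.length_cons, List.length_nil] at hl
    · omega
    · omega
    · omega
    · omega
    · exact ⟨t1, t2, t3, t4, rfl⟩
    · omega
  have hM : p.roots = ([s1, s2, s3, s4] : List ℂ) := by
    rw [← Multiset.coe_toList p.roots, hL]
  rw [hM] at hfact
  simp only [Multiset.map_coe, Multiset.prod_coe, List.map_cons, List.map_nil, List.prod_cons,
    List.prod_nil, mul_one] at hfact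
  -- each root satisfies the quartic equation, hence lies in |w| < a
  have hroot_eq : ∀ s : ℂ, s ∈ ({s1, s2, s3, s4} : Set ℂ) → ‖s‖ < a := by
    intro s hs
    apply hroots s
    have hev : eval s p = 0 := by
      rw [hfact]
      rcases hs with rfl | rfl | rfl | rfl <;> simp [eval_mul, eval_sub]
    rw [hpdef] at hev
    simpa using hev
  have habs1 : ‖s1‖ < a := hroot_eq s1 (by simp)
  have habs2 : ‖s2‖ < a := hroot_eq s2 (by simp)
  have habs3 : ‖s3‖ < a := hroot_eq s3 (by simp)
  have habs4 : ‖s4‖ < a := hroot_eq s4 (by simp)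
  have hdne : ∀ s : ℂ, ‖s‖ < a → (a : ℂ) - s ≠ 0 := by
    intro s hs hcontra
    have hsa : s = (a : ℂ) := by linear_combination -hcontra
    rw [hsa, Complex.norm_real, Real.norm_eq_abs, abs_of_pos ha0] at hs
    exact lt_irrefl _ hs
  set d1 : ℂ := (a : ℂ) - s1 with hd1
  set d2 : ℂ := (a : ℂ) - s2 with hd2
  set d3 : ℂ := (a : ℂ) - s3 with hd3
  set d4 : ℂ := (a : ℂ) - s4 with hd4
  have hd1n : d1 ≠ 0 := hdne s1 habs1
  have hd2n : d2 ≠ 0 := hdne s2 habs2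
  have hd3n : d3 ≠ 0 := hdne s3 habs3
  have hd4n : d4 ≠ 0 := hdne s4 habs4
  have h1 := congrArg (eval ((a : ℝ) : ℂ)) hfact
  rw [hpdef] at h1
  simp only [eval_add, eval_sub, eval_mul, eval_pow, eval_X, eval_C, eval_one] at h1
  have hprod : d1 * d2 * d3 * d4 = ((a ^ 4 - e3 * a + e4 : ℝ) : ℂ) := by
    rw [hd1, hd2, hd3, hd4]
    push_cast
    linear_combination -h1
  have h2d := congrArg (fun q : ℂ[X] => eval ((a : ℝ) : ℂ) (derivative q)) hfact
  simp only [hpdef, derivative_add, derivative_sub, derivative_mul, derivative_pow,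
    derivative_X, derivative_C, derivative_one, eval_add, eval_sub, eval_mul, eval_pow,
    eval_X, eval_C, eval_one, eval_ofNat, zero_mul, mul_zero, zero_add, add_zero, mul_one,
    one_mul, zero_sub, sub_zero, eval_zero, eval_natCast] at h2d
  have hsum : d2 * d3 * d4 + d1 * d3 * d4 + d1 * d2 * d4 + d1 * d2 * d3
      = ((4 * a ^ 3 - a ^ 2 - e3 : ℝ) : ℂ) := by
    rw [hd1, hd2, hd3, hd4]
    push_cast
    linear_combination -h2d
  have hGa : 0 < a ^ 4 - e3 * a + e4 := statement13_aux_pos a e3 e4 ha0 he3 he4 hroots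
  -- Re (1/(a - s)) > 1/(2a) for |s| < a
  have hkey : ∀ s : ℂ, ‖s‖ < a → 1 / (2 * a) < (((a : ℂ) - s)⁻¹).re := by
    intro s hs
    have hne : (a : ℂ) - s ≠ 0 := hdne s hs
    have hnsq : 0 < Complex.normSq ((a : ℂ) - s) := Complex.normSq_pos.mpr hne
    rw [Complex.inv_re]
    rw [div_lt_div_iff₀ (by positivity) hnsq]
    have hs2 : s.re ^ 2 + s.im ^ 2 < a ^ 2 := by
      have hsq := Complex.sq_norm s
      rw [Complex.normSq_apply] at hsq
      nlinarith [norm_nonneg s]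
    simp only [Complex.normSq_apply, Complex.sub_re, Complex.sub_im, Complex.ofReal_re,
      Complex.ofReal_im, zero_sub]
    nlinarith
  set S : ℂ := d1⁻¹ + d2⁻¹ + d3⁻¹ + d4⁻¹ with hS
  have hHS : ((4 * a ^ 3 - a ^ 2 - e3 : ℝ) : ℂ) = ((a ^ 4 - e3 * a + e4 : ℝ) : ℂ) * S := by
    rw [← hprod, ← hsum, hS]
    field_simp
  have hre := congrArg Complex.re hHS
  rw [Complex.ofReal_re, Complex.re_ofReal_mul] at hre
  have hSre : 2 / a < S.re := by
    rw [hS]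
    simp only [Complex.add_re]
    have k1 := hkey s1 habs1
    have k2 := hkey s2 habs2
    have k3 := hkey s3 habs3
    have k4 := hkey s4 habs4
    rw [← hd1] at k1
    rw [← hd2] at k2
    rw [← hd3] at k3
    rw [← hd4] at k4
    have h24 : 2 / a = 4 * (1 / (2 * a)) := by field_simp; ring
    rw [h24]
    linarith
  have hfin : a * (4 * a ^ 3 - a ^ 2 - e3) > 2 * (a ^ 4 - e3 * a + e4) := by
    have hmul : (a ^ 4 - e3 * a + e4) * (2 / a) < (a ^ 4 - e3 * a + e4) * S.re :=
      mul_lt_mul_of_pos_left hSre hGa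
    rw [← hre] at hmul
    have hid : (a ^ 4 - e3 * a + e4) * (2 / a) * a = 2 * (a ^ 4 - e3 * a + e4) := by
      field_simp
    nlinarith [mul_lt_mul_of_pos_right hmul ha0]
  nlinarith [mul_nonneg (pow_nonneg ha0.le 3) (by linarith : (0:ℝ) ≤ 1 - 3 * a), hGa, hfin, he4]



/-- Lemma 5: for `q₂, q₃, q₄ > 0` with `q₂ ≥ 3`, the polynomial
`S₄(z) = 1 - z + z²/q₂ - z³/(q₂²q₃) + z⁴/(q₂³q₃²q₄)` has at least one complex root
in the closed disk `{z : |z| ≤ q₂}`. -/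
theorem statement13 (q2 q3 q4 : ℝ) (h2 : 0 < q2) (h3 : 0 < q3) (h4 : 0 < q4)
    (hq2 : 3 ≤ q2) :
    ∃ z : ℂ, ‖z‖ ≤ q2 ∧
      1 - z + z ^ 2 / (q2 : ℂ) - z ^ 3 / ((q2 : ℂ) ^ 2 * (q3 : ℂ))
        + z ^ 4 / ((q2 : ℂ) ^ 3 * (q3 : ℂ) ^ 2 * (q4 : ℂ)) = 0 := by
  by_contra hcon
  push_neg at hcon
  have hq2c : (q2 : ℂ) ≠ 0 := by exact_mod_cast h2.ne'
  have hq3c : (q3 : ℂ) ≠ 0 := by exact_mod_cast h3.ne'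
  have hq4c : (q4 : ℂ) ≠ 0 := by exact_mod_cast h4.ne'
  obtain ⟨a, ha⟩ : ∃ x : ℝ, x = q2⁻¹ := ⟨_, rfl⟩
  obtain ⟨e3, he3def⟩ : ∃ x : ℝ, x = (q2 ^ 2 * q3)⁻¹ := ⟨_, rfl⟩
  obtain ⟨e4, he4def⟩ : ∃ x : ℝ, x = (q2 ^ 3 * q3 ^ 2 * q4)⁻¹ := ⟨_, rfl⟩
  have ha0 : 0 < a := by rw [ha]; positivity
  have he3 : 0 < e3 := by rw [he3def]; positivity
  have he4 : 0 < e4 := by rw [he4def]; positivity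
  have ha3 : a ≤ 1 / 3 := by
    rw [ha, inv_le_comm₀ (by positivity) (by norm_num)]
    linarith
  have hroots : ∀ w : ℂ, w ^ 4 - w ^ 3 + (a : ℂ) * w ^ 2 - (e3 : ℂ) * w + (e4 : ℂ) = 0 →
      ‖w‖ < a := by
    intro w hw
    have hw0 : w ≠ 0 := by
      rintro rfl
      simp only [ne_eq, OfNat.ofNat_ne_zero, not_false_eq_true, zero_pow, mul_zero, sub_zero,
        zero_add, add_zero, sub_self, zero_sub, neg_eq_zero] at hw
      norm_num at hw
      exact he4.ne' (by exact_mod_cast hw)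
    have hzero : 1 - w⁻¹ + (w⁻¹) ^ 2 / (q2 : ℂ) - (w⁻¹) ^ 3 / ((q2 : ℂ) ^ 2 * (q3 : ℂ))
        + (w⁻¹) ^ 4 / ((q2 : ℂ) ^ 3 * (q3 : ℂ) ^ 2 * (q4 : ℂ)) = 0 := by
      rw [ha, he3def, he4def] at hw
      push_cast at hw
      have c1 : w * w⁻¹ = 1 := mul_inv_cancel₀ hw0
      linear_combination (w⁻¹) ^ 4 * hw -
        ((1 + w * w⁻¹ + (w * w⁻¹) ^ 2 + (w * w⁻¹) ^ 3)
          - w⁻¹ * (1 + w * w⁻¹ + (w * w⁻¹) ^ 2)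
          + ((q2 : ℂ))⁻¹ * (w⁻¹) ^ 2 * (1 + w * w⁻¹)
          - ((q2 : ℂ) ^ 2 * (q3 : ℂ))⁻¹ * (w⁻¹) ^ 3) * c1
    have hgt : q2 < ‖w⁻¹‖ := lt_of_not_ge fun hle => hcon _ hle hzero
    rw [norm_inv] at hgt
    have habs0 : 0 < ‖w‖ := norm_pos_iff.mpr hw0
    have h1 : ‖w‖ * q2 < ‖w‖ * (‖w‖)⁻¹ :=
      mul_lt_mul_of_pos_left hgt habs0
    rw [mul_inv_cancel₀ habs0.ne'] at h1
    rw [ha, inv_eq_one_div, lt_div_iff₀ h2]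
    linarith
  exact statement13_core a e3 e4 ha0 ha3 he3 he4 hroots
end

section
/- Let q_2, q_3, q_4 be real numbers with 3 ≤ q_2 < 4 and q_2 ≤ q_3 ≤ q_4, and let S_4(z) = 1 - z + z²/q_2 - z³/(q_2² q_3) + z⁴/(q_2³ q_3² q_4). Then min_{0 ≤ θ ≤ 2π} |S_4(q_2 e^{iθ})| ≥ q_2/(q_3² q_4); in particular S_4 has no zeros on the circle {z : |z| = q_2}. -/
private lemma quad_nn (s a : ℝ) (hs : 0 ≤ s) (ha : 3 ≤ a) :
    0 ≤ 2*a^7 + (8*a^10-42*a^9+54*a^8+10*a^7-32*a^6)*s + (28*a^8-72*a^7-20*a^6+80*a^5)*s^2 := by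
  have h3 : 0 ≤ a - 3 := by linarith
  have hc11 : 0 ≤ 8*a^10-42*a^9+54*a^8+10*a^7-32*a^6+1458 := by
    nlinarith [pow_nonneg h3 2, pow_nonneg h3 3, pow_nonneg h3 4, pow_nonneg h3 5,
      pow_nonneg h3 6, pow_nonneg h3 7, pow_nonneg h3 8, pow_nonneg h3 9, pow_nonneg h3 10]
  have hc21 : 0 ≤ 28*a^8-72*a^7-20*a^6+80*a^5-31104 := by
    nlinarith [pow_nonneg h3 2, pow_nonneg h3 3, pow_nonneg h3 4, pow_nonneg h3 5,
      pow_nonneg h3 6, pow_nonneg h3 7, pow_nonneg h3 8]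
  have hc01 : 0 ≤ 2*a^7 - 4374 := by
    nlinarith [pow_nonneg h3 2, pow_nonneg h3 3, pow_nonneg h3 4, pow_nonneg h3 5,
      pow_nonneg h3 6, pow_nonneg h3 7]
  nlinarith [mul_nonneg hc11 hs, mul_nonneg hc21 (mul_nonneg hs hs), sq_nonneg (s - 3/128)]

set_option maxHeartbeats 1000000 in
private lemma keyP2 (x a b : ℝ) (hx1 : 0 ≤ a - x) (ha : 3 ≤ a) (hb : a ≤ b) :
    0 ≤ a^6*b^4 + 2*a^7*b - 2*a^7*b^4 - 2*a^8*b + a^8*b^2 - 2*a^8*b^3 + 2*a^8*b^4 + 6*x*a^6*b^3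
      - 2*x*a^6*b^4 - 2*x*a^7 + 6*x*a^7*b - 2*x*a^7*b^3 - 2*x*a^7*b^4 - 16*x^2*a^5*b
      + 4*x^2*a^5*b^4 + 4*x^2*a^6*b + 4*x^2*a^6*b^3 - 8*x^3*a^4*b^3 - 8*x^3*a^5*b + 16*x^4*a^3*b := by
  have h3 : 0 ≤ a - 3 := by linarith
  have hd : 0 ≤ b - a := by linarith
  have ha0 : (0:ℝ) < a := by linarith
  have hg : 0 ≤ a^4-6*a^3+9*a^2+5*a-15 := by
    nlinarith [pow_nonneg h3 2, pow_nonneg h3 3, pow_nonneg h3 4]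
  have hh : 0 ≤ 2*a^3-6*a^2-5*a+20 := by
    nlinarith [pow_nonneg h3 2, pow_nonneg h3 3]
  have hq1 : 0 ≤ a^2+a-8 := by nlinarith
  have hq2 : 0 ≤ 3*a^2+a-8 := by nlinarith
  have s2 := pow_nonneg hx1 2
  have s3 := pow_nonneg hx1 3
  have s4 := pow_nonneg hx1 4
  have d2 := pow_nonneg hd 2
  have d3 := pow_nonneg hd 3
  have d4 := pow_nonneg hd 4
  have t1 : 0 ≤ (a-x)*(2*a^7*(a^4-6*a^3+9*a^2+5*a-15)) :=
    mul_nonneg hx1 (mul_nonneg (by positivity) hg)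
  have t2 : 0 ≤ (a-x)^2*(4*a^6*(2*a^3-6*a^2-5*a+20)) :=
    mul_nonneg s2 (mul_nonneg (by positivity) hh)
  have t3 : 0 ≤ (a-x)^3*(8*a^5*(a^2+a-8)) :=
    mul_nonneg s3 (mul_nonneg (by positivity) hq1)
  have t4 : 0 ≤ (a-x)^4*(16*a^4) := mul_nonneg s4 (by positivity)
  have t5 : 0 ≤ (b-a)*(2*a^7 + (8*a^10-42*a^9+54*a^8+10*a^7-32*a^6)*(a-x)
      + (28*a^8-72*a^7-20*a^6+80*a^5)*(a-x)^2) :=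
    mul_nonneg hd (quad_nn (a-x) a hx1 ha)
  have t6 : 0 ≤ (b-a)*((a-x)^3*(8*a^4*(3*a^2+a-8))) :=
    mul_nonneg hd (mul_nonneg s3 (mul_nonneg (by positivity) hq2))
  have t7 : 0 ≤ (b-a)*((a-x)^4*(16*a^3)) :=
    mul_nonneg hd (mul_nonneg s4 (by positivity))
  have t8 : 0 ≤ (b-a)^2*(a^8 + (a-x)*(6*a^7*(2*a-3)*(a-3)) + (a-x)^2*(36*a^6*(a-2))
      + (a-x)^3*(24*a^5)) := by
    refine mul_nonneg d2 ?_
    have i1 : 0 ≤ (a-x)*(6*a^7*(2*a-3)*(a-3)) :=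
      mul_nonneg hx1 (mul_nonneg (mul_nonneg (by positivity) (by linarith)) h3)
    have i2 : 0 ≤ (a-x)^2*(36*a^6*(a-2)) :=
      mul_nonneg s2 (mul_nonneg (by positivity) (by linarith))
    have i3 : 0 ≤ (a-x)^3*(24*a^5) := mul_nonneg s3 (by positivity)
    have i0 : (0:ℝ) ≤ a^8 := by positivity
    linarith
  have t9 : 0 ≤ (b-a)^3*(2*a^7 + (a-x)*(2*a^6*(4*a-3)*(a-3)) + (a-x)^2*(4*a^5*(5*a-6))
      + (a-x)^3*(8*a^4)) := by
    refine mul_nonneg d3 ?_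
    have i1 : 0 ≤ (a-x)*(2*a^6*(4*a-3)*(a-3)) :=
      mul_nonneg hx1 (mul_nonneg (mul_nonneg (by positivity) (by linarith)) h3)
    have i2 : 0 ≤ (a-x)^2*(4*a^5*(5*a-6)) :=
      mul_nonneg s2 (mul_nonneg (by positivity) (by linarith))
    have i3 : 0 ≤ (a-x)^3*(8*a^4) := mul_nonneg s3 (by positivity)
    have i0 : (0:ℝ) ≤ 2*a^7 := by positivity
    linarith
  have t10 : 0 ≤ (b-a)^4*(a^6 + (a-x)*(2*a^6*(a-3)) + (a-x)^2*(4*a^5)) := by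
    refine mul_nonneg d4 ?_
    have i1 : 0 ≤ (a-x)*(2*a^6*(a-3)) := mul_nonneg hx1 (mul_nonneg (by positivity) h3)
    have i2 : 0 ≤ (a-x)^2*(4*a^5) := mul_nonneg s2 (by positivity)
    have i0 : (0:ℝ) ≤ a^6 := by positivity
    linarith
  linarith [t1, t2, t3, t4, t5, t6, t7, t8, t9, t10]

private lemma keyG3 (x a b : ℝ) (hx : x^2 ≤ a^2) (ha : 3 ≤ a) :
    0 ≤ a^6*b^2 - 2*a^7*b^2 + a^8 - 2*a^8*b + 2*a^8*b^2 + 6*x*a^6*b - 2*x*a^6*b^2 - 2*x*a^7*b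
      - 2*x*a^7*b^2 + 4*x^2*a^5*b^2 + 4*x^2*a^6*b - 8*x^3*a^4*b := by
  have key : a^6*b^2 - 2*a^7*b^2 + a^8 - 2*a^8*b + 2*a^8*b^2 + 6*x*a^6*b - 2*x*a^6*b^2
      - 2*x*a^7*b - 2*x*a^7*b^2 + 4*x^2*a^5*b^2 + 4*x^2*a^6*b - 8*x^3*a^4*b
      = (a^3*b - a^4*b + 3*x*a^3 - x*a^3*b + 2*x^2*a^2*b - 4*x^3*a)^2
        + (a^2 - x^2)*(a^3 - a^3*b + 2*x*a^2*b - 4*x^2*a)^2 := by ring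
  rw [key]
  exact add_nonneg (sq_nonneg _) (mul_nonneg (sub_nonneg.2 hx) (sq_nonneg _))

open Complex in
set_option maxHeartbeats 1000000 in
private lemma ns_id (a b c x y : ℝ) (hy : x^2 + y^2 = a^2) :
    Complex.normSq (((a^3*b^2*c : ℝ) : ℂ) * (1 - (x + y*I)) + ((a^2*b^2*c : ℝ) : ℂ) * (x + y*I)^2
      - ((a*b*c : ℝ) : ℂ) * (x + y*I)^3 + (x + y*I)^4)
    = a^8 + b*c*(b*(c-b)*(a^6*b^2 - 2*a^7*b^2 + a^8 - 2*a^8*b + 2*a^8*b^2 + 6*x*a^6*b - 2*x*a^6*b^2 - 2*x*a^7*b - 2*x*a^7*b^2 + 4*x^2*a^5*b^2 + 4*x^2*a^6*b - 8*x^3*a^4*b)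
      + (a^6*b^4 + 2*a^7*b - 2*a^7*b^4 - 2*a^8*b + a^8*b^2 - 2*a^8*b^3 + 2*a^8*b^4 + 6*x*a^6*b^3 - 2*x*a^6*b^4 - 2*x*a^7 + 6*x*a^7*b - 2*x*a^7*b^3 - 2*x*a^7*b^4 - 16*x^2*a^5*b + 4*x^2*a^5*b^4 + 4*x^2*a^6*b + 4*x^2*a^6*b^3 - 8*x^3*a^4*b^3 - 8*x^3*a^5*b + 16*x^4*a^3*b)) := by
  simp only [Complex.normSq_apply, Complex.add_re, Complex.add_im, Complex.sub_re, Complex.sub_im,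
    Complex.mul_re, Complex.mul_im, Complex.ofReal_re, Complex.ofReal_im, Complex.I_re,
    Complex.I_im, Complex.one_re, Complex.one_im, pow_succ, pow_zero, one_mul]
  ring_nf
  linear_combination (2*a^5*b^2*c - 2*a^5*b^4*c^2 + a^6 - 2*a^6*b^2*c + a^6*b^2*c^2 - 2*a^6*b^3*c^2 + 2*a^6*b^4*c^2 + 2*y^2*a^3*b^2*c + y^2*a^4 - 2*y^2*a^4*b^2*c + y^2*a^4*b^2*c^2 - 2*y^2*a^4*b^3*c^2 + y^2*a^4*b^4*c^2 + y^4*a^2 - 2*y^4*a^2*b^2*c + y^4*a^2*b^2*c^2 + y^6 + 6*x*a^4*b^3*c^2 - 2*x*a^5*b*c + 6*x*a^5*b^2*c - 2*x*a^5*b^3*c^2 - 2*x*a^5*b^4*c^2 - 2*x*y^2*a^3*b*c + 6*x*y^2*a^3*b^2*c - 2*x*y^2*a^3*b^3*c^2 - 2*x*y^4*a*b*c - 14*x^2*a^3*b^2*c + x^2*a^4 + 2*x^2*a^4*b^2*c + x^2*a^4*b^2*c^2 + 2*x^2*a^4*b^3*c^2 + x^2*a^4*b^4*c^2 + 2*x^2*y^2*a^2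 + 2*x^2*y^2*a^2*b^2*c^2 + 3*x^2*y^4 - 2*x^3*a^3*b*c - 2*x^3*a^3*b^2*c - 2*x^3*a^3*b^3*c^2 - 4*x^3*y^2*a*b*c + x^4*a^2 + 2*x^4*a^2*b^2*c + x^4*a^2*b^2*c^2 + 3*x^4*y^2 - 2*x^5*a*b*c + x^6) * hy

set_option maxHeartbeats 2000000 in
private lemma circle_bound (q2 q3 q4 : ℝ) (h1 : 3 ≤ q2) (h3 : q2 ≤ q3) (h4 : q3 ≤ q4) (z : ℂ)
    (hz : ‖z‖ = q2) :
    q2 / (q3^2*q4) ≤ ‖(1 - z + z^2/(q2:ℂ) - z^3/((q2:ℂ)^2*(q3:ℂ))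
      + z^4/((q2:ℂ)^3*(q3:ℂ)^2*(q4:ℂ)))‖ := by
  have ha : (0:ℝ) < q2 := by linarith
  have hb : (0:ℝ) < q3 := by linarith
  have hc : (0:ℝ) < q4 := by linarith
  set x := z.re with hxdef
  set y := z.im with hydef
  have hzxy : (x:ℂ) + (y:ℂ)*Complex.I = z := Complex.re_add_im z
  have hy : x^2 + y^2 = q2^2 := by
    have h := Complex.sq_norm z
    rw [hz] at h
    simpa [Complex.normSq_apply, sq] using h.symm
  have hx2 : x^2 ≤ q2^2 := by nlinarith [sq_nonneg y]
  have hxle : 0 ≤ q2 - x := by nlinarith [sq_nonneg y, sq_nonneg (q2 + x)]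
  have hq2 : (q2:ℂ) ≠ 0 := Complex.ofReal_ne_zero.2 ha.ne'
  have hq3 : (q3:ℂ) ≠ 0 := Complex.ofReal_ne_zero.2 hb.ne'
  have hq4 : (q4:ℂ) ≠ 0 := Complex.ofReal_ne_zero.2 hc.ne'
  set N : ℂ := ((q2^3*q3^2*q4 : ℝ) : ℂ) * (1 - z) + ((q2^2*q3^2*q4 : ℝ) : ℂ) * z^2
      - ((q2*q3*q4 : ℝ) : ℂ) * z^3 + z^4 with hN
  have hD : ((q2:ℂ)^3*((q3:ℂ)^2*(q4:ℂ))) ≠ 0 :=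
    mul_ne_zero (pow_ne_zero _ hq2) (mul_ne_zero (pow_ne_zero _ hq3) hq4)
  have hEq : 1 - z + z^2/(q2:ℂ) - z^3/((q2:ℂ)^2*(q3:ℂ)) + z^4/((q2:ℂ)^3*(q3:ℂ)^2*(q4:ℂ))
      = N / ((q2:ℂ)^3*((q3:ℂ)^2*(q4:ℂ))) := by
    have e1 : (1:ℂ) - z = ((q2^3*q3^2*q4 : ℝ):ℂ)*(1-z) / ((q2:ℂ)^3*((q3:ℂ)^2*(q4:ℂ))) := by
      rw [eq_div_iff hD]; push_cast; ring
    have e2 : z^2/(q2:ℂ) = ((q2^2*q3^2*q4 : ℝ):ℂ)*z^2 / ((q2:ℂ)^3*((q3:ℂ)^2*(q4:ℂ))) := by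
      rw [div_eq_div_iff hq2 hD]; push_cast; ring
    have e3 : z^3/((q2:ℂ)^2*(q3:ℂ)) = ((q2*q3*q4 : ℝ):ℂ)*z^3 / ((q2:ℂ)^3*((q3:ℂ)^2*(q4:ℂ))) := by
      rw [div_eq_div_iff (mul_ne_zero (pow_ne_zero _ hq2) hq3) hD]; push_cast; ring
    have e4 : z^4/((q2:ℂ)^3*(q3:ℂ)^2*(q4:ℂ)) = z^4 / ((q2:ℂ)^3*((q3:ℂ)^2*(q4:ℂ))) := by
      rw [mul_assoc]
    rw [e1, e2, e3, e4, ← add_div, ← sub_div, ← add_div, hN]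
  rw [hEq, norm_div]
  have hDabs : ‖(q2:ℂ)^3*((q3:ℂ)^2*(q4:ℂ))‖ = q2^3*(q3^2*q4) := by
    simp [norm_mul, norm_pow, Complex.norm_real, abs_of_pos ha, abs_of_pos hb, abs_of_pos hc]
  rw [hDabs]
  have hns : Complex.normSq N = q2^8 + q3*q4*(q3*(q4-q3)*(q2^6*q3^2 - 2*q2^7*q3^2 + q2^8
      - 2*q2^8*q3 + 2*q2^8*q3^2 + 6*x*q2^6*q3 - 2*x*q2^6*q3^2 - 2*x*q2^7*q3 - 2*x*q2^7*q3^2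
      + 4*x^2*q2^5*q3^2 + 4*x^2*q2^6*q3 - 8*x^3*q2^4*q3)
      + (q2^6*q3^4 + 2*q2^7*q3 - 2*q2^7*q3^4 - 2*q2^8*q3 + q2^8*q3^2 - 2*q2^8*q3^3 + 2*q2^8*q3^4
      + 6*x*q2^6*q3^3 - 2*x*q2^6*q3^4 - 2*x*q2^7 + 6*x*q2^7*q3 - 2*x*q2^7*q3^3 - 2*x*q2^7*q3^4
      - 16*x^2*q2^5*q3 + 4*x^2*q2^5*q3^4 + 4*x^2*q2^6*q3 + 4*x^2*q2^6*q3^3 - 8*x^3*q2^4*q3^3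
      - 8*x^3*q2^5*q3 + 16*x^4*q2^3*q3)) := by
    rw [hN, ← hzxy]
    exact ns_id q2 q3 q4 x y hy
  have hG3 := keyG3 x q2 q3 hx2 h1
  have hP2 := keyP2 x q2 q3 hxle h1 h3
  have h8 : q2^8 ≤ Complex.normSq N := by
    have hbc : 0 ≤ q3*q4 := by positivity
    have hcb : 0 ≤ q3*(q4-q3) := mul_nonneg hb.le (by linarith)
    linarith [hns, mul_nonneg hbc (add_nonneg (mul_nonneg hcb hG3) hP2)]
  have habs : ‖N‖ ^ 2 = Complex.normSq N := Complex.sq_norm N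
  have hnum : q2^4 ≤ ‖N‖ := by
    nlinarith [norm_nonneg N, habs, h8, pow_pos ha 4]
  rw [div_le_div_iff₀ (by positivity) (by positivity)]
  nlinarith [mul_le_mul_of_nonneg_right hnum (by positivity : (0:ℝ) ≤ q3^2*q4)]

/-- for `3 ≤ q₂ < 4` and `q₂ ≤ q₃ ≤ q₄`, the fourth section
`S₄(z) = 1 - z + z²/q₂ - z³/(q₂²q₃) + z⁴/(q₂³q₃²q₄)` satisfies
`min_{0≤θ≤2π} |S₄(q₂e^{iθ})| ≥ q₂/(q₃²q₄)`; in particular `S₄` has no zeros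
on the circle `{z : |z| = q₂}`. -/
theorem statement15 (q2 q3 q4 : ℝ) (h1 : 3 ≤ q2) (h2 : q2 < 4) (h3 : q2 ≤ q3)
    (h4 : q3 ≤ q4) (S4 : ℂ → ℂ)
    (hS4 : ∀ z : ℂ, S4 z = 1 - z + z ^ 2 / (q2 : ℂ) - z ^ 3 / ((q2 : ℂ) ^ 2 * (q3 : ℂ))
      + z ^ 4 / ((q2 : ℂ) ^ 3 * (q3 : ℂ) ^ 2 * (q4 : ℂ))) :
    (∀ θ ∈ Set.Icc (0 : ℝ) (2 * Real.pi),
      q2 / (q3 ^ 2 * q4) ≤ ‖S4 ((q2 : ℂ) * Complex.exp (θ * Complex.I))‖) ∧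
    ∀ z : ℂ, ‖z‖ = q2 → S4 z ≠ 0 := by
  have ha : (0:ℝ) < q2 := by linarith
  constructor
  · intro θ _
    have hz : ‖(q2:ℂ) * Complex.exp (θ*Complex.I)‖ = q2 := by
      rw [norm_mul, Complex.norm_exp_ofReal_mul_I, Complex.norm_real, Real.norm_eq_abs, abs_of_pos ha, mul_one]
    rw [hS4]
    exact circle_bound q2 q3 q4 h1 h3 h4 _ hz
  · intro z hz hzero
    have hpos : 0 < q2/(q3^2*q4) := by
      have hb : (0:ℝ) < q3 := by linarith
      have hc : (0:ℝ) < q4 := by linarith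
      positivity
    have hbd := circle_bound q2 q3 q4 h1 h3 h4 z hz
    rw [hS4 z] at hzero
    rw [hzero] at hbd
    simp at hbd
    linarith
end
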